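/- Let u : ℕ^n → K be a sequence whose ideal of C-relations I ⊆ K[x_1,...,x_n] is zero-dimensional with (finite) staircase S for a monomial ordering ≺, i.e., S is the set of monomials not in LM(I). Then the multi-Hankel matrix H_{S,S}, whose entry at row s and column s' is [s·s']_u, is invertible; moreover for every monomial m ∉ S, the column H_{S,{m}} is a K-linear combination of the columns of H_{S,S}. -/

import Mathlib

open MvPolynomial


private lemma ev_mul_monomial {K : Type*} [Field K] {n : ℕ} (u : ((Fin n) →₀ ℕ) → K)
    (g : MvPolynomial (Fin n) K) (i : (Fin n) →₀ ℕ) :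
    ((AddMonoidAlgebra.coeff (g * monomial i (1:K))).sum fun s c => c * u s) = (AddMonoidAlgebra.coeff g).sum fun t c => c * u (t + i) := by
  induction g using MvPolynomial.induction_on' with
  | monomial t c =>
      rw [monomial_mul, mul_one, sum_monomial_eq (by simp), sum_monomial_eq (by simp)]
  | add p q hp hq =>
      rw [add_mul, AddMonoidAlgebra.coeff_add, AddMonoidAlgebra.coeff_add, Finsupp.sum_add_index' (fun a => by simp) (fun a b1 b2 => add_mul b1 b2 _),
        Finsupp.sum_add_index' (fun a => by simp) (fun a b1 b2 => add_mul b1 b2 _), hp, hq]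

private lemma ev_finset_sum {K : Type*} [Field K] {n : ℕ} (u : ((Fin n) →₀ ℕ) → K) {α : Type*}
    {F : Finset α} {f : α → MvPolynomial (Fin n) K} :
    ((AddMonoidAlgebra.coeff (∑ x ∈ F, f x)).sum fun s c => c * u s) = ∑ x ∈ F, ((AddMonoidAlgebra.coeff (f x)).sum fun s c => c * u s) := by
  classical
  induction F using Finset.induction_on with
  | empty =>
      rw [Finset.sum_empty, Finset.sum_empty, AddMonoidAlgebra.coeff_zero]
      exact Finsupp.sum_zero_index
  | insert a F hx ih =>
      rw [Finset.sum_insert hx, Finset.sum_insert hx, AddMonoidAlgebra.coeff_add,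
        Finsupp.sum_add_index' (fun a => by simp) (fun a b1 b2 => add_mul b1 b2 _), ih]

/-- Let `u : ℕ^n → K` be a table whose ideal `I` of C-relations
is zero-dimensional with finite staircase `S` for a monomial ordering (i.e. `S`
is the set of monomials which are not leading monomials of nonzero elements
of `I`).  Then the multi-Hankel matrix `H_{S,S}` with entries `u_{s+s'}` is
invertible, and for every monomial `b ∉ S` the column `H_{S,{b}}` is a linear
combination of the columns of `H_{S,S}`. -/
theorem multiHankel_staircase_invertible
    (K : Type*) [Field K] (n : ℕ) (u : ((Fin n) →₀ ℕ) → K)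
    (m : MonomialOrder (Fin n))
    (I : Set (MvPolynomial (Fin n) K))
    (hI : I = {g : MvPolynomial (Fin n) K | ∀ i : (Fin n) →₀ ℕ,
      ((AddMonoidAlgebra.coeff (g * monomial i (1 : K))).sum fun s c => c * u s) = 0})
    (S : Finset ((Fin n) →₀ ℕ))
    (hS : ∀ s : (Fin n) →₀ ℕ, s ∈ S ↔
      ¬ ∃ g ∈ I, g ≠ 0 ∧ s ∈ g.support ∧
        ∀ s' ∈ g.support, m.toSyn s' ≤ m.toSyn s) :
    IsUnit (Matrix.of fun s s' : S => u (s.1 + s'.1)).det ∧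
    ∀ b : (Fin n) →₀ ℕ, b ∉ S → ∃ c : S → K,
      ∀ s : S, u (s.1 + b) = ∑ s' : S, c s' * u (s.1 + s'.1) := by
  subst hI
  -- every polynomial in I gives a linear relation for every shift i
  have hrel : ∀ g : MvPolynomial (Fin n) K,
      (∀ i : (Fin n) →₀ ℕ, ((AddMonoidAlgebra.coeff (g * monomial i (1:K))).sum fun s c => c * u s) = 0) →
      ∀ i : (Fin n) →₀ ℕ, ∑ t ∈ g.support, coeff t g * u (t + i) = 0 := by
    intro g hg i
    have := hg i
    rwa [ev_mul_monomial, sum_def] at this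
  -- key lemma: every column is a combination of the S-columns
  have wf : WellFounded (fun a b : (Fin n) →₀ ℕ => m.toSyn a < m.toSyn b) :=
    InvImage.wf _ m.wf.wf
  have key : ∀ b : (Fin n) →₀ ℕ, ∃ c : S → K,
      ∀ i : (Fin n) →₀ ℕ, u (b + i) = ∑ s' : S, c s' * u (s'.1 + i) := by
    intro b
    induction b using WellFounded.induction wf with
    | _ b IH =>
    by_cases hb : b ∈ S
    · refine ⟨fun s' => if s' = ⟨b, hb⟩ then 1 else 0, fun i => ?_⟩
      simp only [ite_mul, one_mul, zero_mul]
      rw [Finset.sum_ite_eq' Finset.univ (⟨b, hb⟩ : S) (fun s' => u (s'.1 + i))]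
      simp
    · obtain ⟨g, hgI, hg0, hbsupp, hmax⟩ := not_not.mp (fun h' => hb ((hS b).mpr h'))
      have hgI' : ∀ i : (Fin n) →₀ ℕ,
          ((AddMonoidAlgebra.coeff (g * monomial i (1:K))).sum fun s c => c * u s) = 0 := hgI
      have hb' : coeff b g ≠ 0 := mem_support_iff.mp hbsupp
      set E := g.support.erase b with hE
      have IH' : ∀ t ∈ E, ∃ c : S → K,
          ∀ i : (Fin n) →₀ ℕ, u (t + i) = ∑ s' : S, c s' * u (s'.1 + i) := fun t ht =>
        IH t (lt_of_le_of_ne (hmax t (Finset.mem_of_mem_erase ht))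
          (fun h => Finset.ne_of_mem_erase ht (m.toSyn.injective h)))
      choose cc hcc using IH'
      refine ⟨fun s' => ∑ t ∈ E.attach, (-(coeff t.1 g) / coeff b g) * cc t.1 t.2 s',
        fun i => ?_⟩
      have h0 : coeff b g * u (b + i) + ∑ t ∈ E, coeff t g * u (t + i) = 0 := by
        have h1 := hrel g hgI' i
        rw [← Finset.add_sum_erase _ (fun t => coeff t g * u (t + i)) hbsupp] at h1
        exact h1
      have step1 : u (b + i) = ∑ t ∈ E, (-(coeff t g) / coeff b g) * u (t + i) := by
        rw [Finset.sum_congr rfl (fun t _ => div_mul_eq_mul_div _ _ _), ← Finset.sum_div,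
          eq_div_iff hb']
        have : ∑ t ∈ E, -(coeff t g) * u (t + i) = -∑ t ∈ E, coeff t g * u (t + i) := by
          rw [← Finset.sum_neg_distrib]
          exact Finset.sum_congr rfl fun t _ => by ring
        rw [this]
        linear_combination h0
      calc u (b + i)
          = ∑ t ∈ E, (-(coeff t g) / coeff b g) * u (t + i) := step1
        _ = ∑ t ∈ E.attach, (-(coeff t.1 g) / coeff b g) * u (t.1 + i) :=
            (Finset.sum_attach E fun t => (-(coeff t g) / coeff b g) * u (t + i)).symm
        _ = ∑ t ∈ E.attach, (-(coeff t.1 g) / coeff b g) *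
              ∑ s' : S, cc t.1 t.2 s' * u (s'.1 + i) := by
            exact Finset.sum_congr rfl fun t _ => by rw [hcc t.1 t.2 i]
        _ = ∑ t ∈ E.attach, ∑ s' : S,
              ((-(coeff t.1 g) / coeff b g) * cc t.1 t.2 s') * u (s'.1 + i) := by
            exact Finset.sum_congr rfl fun t _ => by
              rw [Finset.mul_sum]; exact Finset.sum_congr rfl fun s' _ => by ring
        _ = ∑ s' : S, (∑ t ∈ E.attach, (-(coeff t.1 g) / coeff b g) * cc t.1 t.2 s')
              * u (s'.1 + i) := by
            rw [Finset.sum_comm]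
            exact Finset.sum_congr rfl fun s' _ => by rw [Finset.sum_mul]
  constructor
  · rw [isUnit_iff_ne_zero]
    intro hdet
    obtain ⟨v, hv0, hv⟩ := (Matrix.exists_mulVec_eq_zero_iff).mpr hdet
    have hv' : ∀ s : S, ∑ s' : S, u (s.1 + s'.1) * v s' = 0 := fun s => by
      have := congrFun hv s
      simpa [Matrix.mulVec, dotProduct] using this
    set g : MvPolynomial (Fin n) K := ∑ s' : S, monomial s'.1 (v s') with hg
    have hvals : ∀ i : (Fin n) →₀ ℕ, ∑ s' : S, v s' * u (s'.1 + i) = 0 := by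
      intro i
      obtain ⟨c, hc⟩ := key i
      calc ∑ s' : S, v s' * u (s'.1 + i)
          = ∑ s' : S, v s' * ∑ s'' : S, c s'' * u (s''.1 + s'.1) := by
            exact Finset.sum_congr rfl fun s' _ => by rw [add_comm s'.1 i, hc s'.1]
        _ = ∑ s' : S, ∑ s'' : S, c s'' * (u (s''.1 + s'.1) * v s') := by
            exact Finset.sum_congr rfl fun s' _ => by
              rw [Finset.mul_sum]
              exact Finset.sum_congr rfl fun s'' _ => by ring
        _ = ∑ s'' : S, ∑ s' : S, c s'' * (u (s''.1 + s'.1) * v s') := Finset.sum_comm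
        _ = ∑ s'' : S, c s'' * ∑ s' : S, u (s''.1 + s'.1) * v s' :=
            Finset.sum_congr rfl fun s'' _ => (Finset.mul_sum _ _ _).symm
        _ = 0 := Finset.sum_eq_zero fun s'' _ => by rw [hv' s'', mul_zero]
    have hgI : ∀ i : (Fin n) →₀ ℕ,
        ((AddMonoidAlgebra.coeff (g * monomial i (1:K))).sum fun s c => c * u s) = 0 := by
      intro i
      rw [ev_mul_monomial, hg, ev_finset_sum,
        Finset.sum_congr rfl (fun s' _ => sum_monomial_eq (by simp))]
      exact hvals i
    obtain ⟨s0, hs0⟩ := Function.ne_iff.mp hv0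
    have hcoeff : ∀ s : S, coeff s.1 g = v s := by
      intro s
      rw [hg, coeff_sum]
      rw [Finset.sum_congr rfl (fun s' _ => coeff_monomial s.1 s'.1 (v s'))]
      rw [Finset.sum_congr rfl (fun s' _ => by
        rw [show (if s'.1 = s.1 then v s' else 0) = if s' = s then v s' else 0 by
          by_cases h : s' = s
          · subst h; simp
          · rw [if_neg h, if_neg (fun e => h (Subtype.ext e))]])]
      simp
    have hg0 : g ≠ 0 := fun h => hs0 (by simp only [Pi.zero_apply]; rw [← hcoeff s0, h, coeff_zero])
    have hsupp : g.support ⊆ S := by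
      intro t ht
      have := MvPolynomial.support_sum ht
      obtain ⟨s', -, hts⟩ := Finset.mem_biUnion.mp this
      have := Finsupp.support_single_subset hts
      rw [Finset.mem_singleton] at this
      rw [this]
      exact s'.2
    obtain ⟨t0, ht0mem, ht0max⟩ :=
      Finset.exists_max_image g.support (fun t => m.toSyn t) (support_nonempty.mpr hg0)
    exact ((hS t0).mp (hsupp ht0mem)) ⟨g, hgI, hg0, ht0mem, ht0max⟩
  · intro b _
    obtain ⟨c, hc⟩ := key b
    refine ⟨c, fun s => ?_⟩
    rw [add_comm s.1 b, hc s.1]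
    exact Finset.sum_congr rfl fun s' _ => by rw [add_comm s'.1 s.1]
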